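/- arXiv:1306.2612 — 2 statements merged into one kernel-verified Lean document; each statement's English description precedes it below -/
import Mathlib

section
/- Let S be a Hausdorff primitive topological inverse semigroup which is the orthogonal sum of a family {B_{λ_i}(G_i)}_{i∈I} of topological Brandt semigroups with zero, where |I| > 1. Let U be a non-empty open subset of S such that (U ∩ B_{λ_i}(G_i)) \ {0} ≠ ∅ for every i ∈ I. Then A·U·A = S for every dense subset A of S. -/
open Topology Pointwise

/-- `inv` witnesses that the semigroup `S` is an *inverse semigroup*:
for every `x`, `inv x` is the unique `y` with `x*y*x = x` and `y*x*y = y`. -/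
structure IsInverseSemigroup (S : Type*) [Mul S] (inv : S → S) : Prop where
  mul_inv_mul : ∀ x : S, x * inv x * x = x
  inv_mul_inv : ∀ x : S, inv x * x * inv x = inv x
  inv_unique : ∀ x y : S, x * y * x = x → y * x * y = y → y = inv x

/-- A semigroup with zero is *primitive* when every non-zero idempotent is
minimal among non-zero idempotents for the natural partial order
`f ≤ e ↔ f*e = e*f = f`. -/
def IsPrimitiveInverse (S : Type*) [Mul S] [Zero S] : Prop :=
  ∀ e f : S, IsIdempotentElem e → e ≠ 0 → IsIdempotentElem f → f ≠ 0 →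
    f * e = f → e * f = f → f = e

/-- The orthogonal sum of the family of Brandt extensions `B_{λ i}(G i)`:
the set `{0} ∪ ⋃ i, (λ i × G i × λ i)`. -/
abbrev OrthSum (I : Type*) (ι : I → Type*) (G : I → Type*) : Type _ :=
  Option (Σ i : I, ι i × G i × ι i)

instance (I : Type*) (ι : I → Type*) (G : I → Type*) : Zero (OrthSum I ι G) :=
  ⟨(none : Option (Σ i : I, ι i × G i × ι i))⟩

/-- The non-zero element `(α, g, β)` of the summand `B_{λ i}(G i)`. -/
def OrthSum.elem {I : Type*} {ι : I → Type*} {G : I → Type*}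
    (i : I) (α : ι i) (g : G i) (β : ι i) : OrthSum I ι G :=
  some ⟨i, (α, g, β)⟩

open Classical in
/-- Multiplication of the orthogonal sum: products are computed inside the
summand `B_{λ i}(G i)` when both factors lie in it, and are `0` otherwise. -/
noncomputable instance (I : Type*) (ι : I → Type*) (G : I → Type*) [∀ i, Mul (G i)] :
    Mul (OrthSum I ι G) :=
  ⟨fun x y =>
    match x, y with
    | some ⟨i, (α, a, β)⟩, some ⟨j, (γ, b, δ)⟩ =>
        if h : i = j then
          (if cast (congrArg ι h) β = γ then
            (some ⟨j, (cast (congrArg ι h) α, (cast (congrArg G h) a) * b, δ)⟩ :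
              Option (Σ i : I, ι i × G i × ι i))
          else none)
        else none
    | _, _ => none⟩

/-- A witness that the semigroup `S` with zero is (isomorphic, as a semigroup
with zero, to) the orthogonal sum of a family of Brandt semigroups
`B_{λ i}(G i)`, `λ i ≥ 1`. -/
structure BrandtDecomposition (S : Type*) [Mul S] [Zero S] where
  I : Type*
  ι : I → Type*
  G : I → Type*
  [instNonempty : ∀ i, Nonempty (ι i)]
  [instGroup : ∀ i, Group (G i)]
  e : S ≃ OrthSum I ι G
  map_mul : ∀ x y : S, e (x * y) = e x * e y
  map_zero : e 0 = 0

namespace OrthSum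
variable {I : Type*} {ι : I → Type*} {G : I → Type*} [∀ i, Mul (G i)]

@[simp] lemma zero_mul' (x : OrthSum I ι G) : (0 : OrthSum I ι G) * x = 0 := rfl

@[simp] lemma mul_zero' (x : OrthSum I ι G) : x * (0 : OrthSum I ι G) = 0 := by
  cases x with
  | none => rfl
  | some p => obtain ⟨i, α, a, β⟩ := p; rfl

open Classical in
lemma elem_mul_elem (i : I) (α : ι i) (a : G i) (β γ : ι i) (b : G i) (δ : ι i) :
    (elem i α a β : OrthSum I ι G) * elem i γ b δ =
      if β = γ then elem i α (a * b) δ else 0 := by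
  show (if h : i = i then
          (if cast (congrArg ι h) β = γ then
            (some ⟨i, (cast (congrArg ι h) α, (cast (congrArg G h) a) * b, δ)⟩ :
              Option (Σ i : I, ι i × G i × ι i))
          else none)
        else none) = _
  rw [dif_pos rfl]
  rfl

open Classical in
lemma elem_mul_elem_ne {i j : I} (h : i ≠ j) (α : ι i) (a : G i) (β : ι i)
    (γ : ι j) (b : G j) (δ : ι j) :
    (elem i α a β : OrthSum I ι G) * elem j γ b δ = 0 := by
  show (if h : i = j then
          (if cast (congrArg ι h) β = γ then
            (some ⟨j, (cast (congrArg ι h) α, (cast (congrArg G h) a) * b, δ)⟩ :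
              Option (Σ i : I, ι i × G i × ι i))
          else none)
        else none) = _
  rw [dif_neg h]; rfl

omit [∀ i, Mul (G i)] in
lemma elem_ne_zero (i : I) (α : ι i) (a : G i) (β : ι i) :
    (elem i α a β : OrthSum I ι G) ≠ 0 :=
  fun h => Option.some_ne_none _ h

end OrthSum

namespace BrandtDecomposition
open Classical

attribute [local instance] BrandtDecomposition.instGroup BrandtDecomposition.instNonempty

variable {S : Type*} [SemigroupWithZero S] (d : BrandtDecomposition S)

/-- The element of `S` corresponding to `(α, g, β)` in the summand `i`. -/
noncomputable def el (i : d.I) (α : d.ι i) (g : d.G i) (β : d.ι i) : S :=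
  d.e.symm (OrthSum.elem i α g β)

lemma e_el (i : d.I) (α : d.ι i) (g : d.G i) (β : d.ι i) :
    d.e (d.el i α g β) = OrthSum.elem i α g β :=
  d.e.apply_symm_apply _

lemma el_ne_zero (i : d.I) (α : d.ι i) (g : d.G i) (β : d.ι i) :
    d.el i α g β ≠ 0 := by
  intro h
  have := d.e_el i α g β
  rw [h, d.map_zero] at this
  exact OrthSum.elem_ne_zero i α g β this.symm

lemma el_mul_el (i : d.I) (α : d.ι i) (a : d.G i) (β γ : d.ι i) (b : d.G i) (δ : d.ι i) :
    d.el i α a β * d.el i γ b δ = if β = γ then d.el i α (a * b) δ else 0 := by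
  apply d.e.injective
  rw [d.map_mul, d.e_el, d.e_el, OrthSum.elem_mul_elem]
  split
  · rw [d.e_el]
  · rw [d.map_zero]

lemma el_mul_el_same (i : d.I) (α : d.ι i) (a : d.G i) (β : d.ι i) (b : d.G i) (δ : d.ι i) :
    d.el i α a β * d.el i β b δ = d.el i α (a * b) δ := by
  rw [d.el_mul_el, if_pos rfl]

lemma el_mul_el_ne {i j : d.I} (h : i ≠ j) (α : d.ι i) (a : d.G i) (β : d.ι i)
    (γ : d.ι j) (b : d.G j) (δ : d.ι j) :
    d.el i α a β * d.el j γ b δ = 0 := by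
  apply d.e.injective
  rw [d.map_mul, d.e_el, d.e_el, OrthSum.elem_mul_elem_ne h, d.map_zero]

lemma cases (x : S) : x = 0 ∨ ∃ (i : d.I) (α : d.ι i) (g : d.G i) (β : d.ι i),
    x = d.el i α g β := by
  have hx : x = d.e.symm (d.e x) := (d.e.symm_apply_apply x).symm
  cases h : d.e x with
  | none =>
    left
    rw [hx, h]
    have : d.e.symm 0 = (0 : S) := by
      rw [← d.map_zero, d.e.symm_apply_apply]
    exact this
  | some p =>
    obtain ⟨i, α, g, β⟩ := p
    right
    exact ⟨i, α, g, β, by rw [hx, h]; rfl⟩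

/-- Sandwiching by the idempotents `e_α`, `e_β` detects membership in the
`(α,β)`-slot of the summand `i`. -/
lemma eq_el_of_sandwich_ne_zero {i : d.I} {α β : d.ι i} {x : S}
    (h : d.el i α 1 α * x * d.el i β 1 β ≠ 0) :
    ∃ c : d.G i, x = d.el i α c β := by
  rcases d.cases x with rfl | ⟨j, α', c, β', rfl⟩
  · exact absurd (by rw [mul_zero, zero_mul]) h
  rcases eq_or_ne i j with rfl | hij
  · rw [d.el_mul_el] at h
    split_ifs at h with h1
    · subst h1
      rw [d.el_mul_el] at h
      split_ifs at h with h2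
      · subst h2
        exact ⟨1 * c * 1, by simp⟩
      · exact absurd rfl h
    · rw [zero_mul] at h
      exact absurd rfl h
  · rw [d.el_mul_el_ne hij, zero_mul] at h
    exact absurd rfl h

lemma inv_el {inv : S → S} (hinv : IsInverseSemigroup S inv)
    (i : d.I) (α : d.ι i) (g : d.G i) (β : d.ι i) :
    inv (d.el i α g β) = d.el i β g⁻¹ α := by
  refine (hinv.inv_unique _ _ ?_ ?_).symm
  · rw [d.el_mul_el_same, d.el_mul_el_same]
    congr 1
    group
  · rw [d.el_mul_el_same, d.el_mul_el_same]
    congr 1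
    group

end BrandtDecomposition

attribute [local instance] BrandtDecomposition.instGroup BrandtDecomposition.instNonempty

/-- Let `S` be a Hausdorff primitive topological inverse
semigroup which is the orthogonal sum of a family `{B_{λ i}(G i)}_{i ∈ I}` of
topological Brandt semigroups with zero, where `|I| > 1`. Let `U` be a
non-empty open subset of `S` meeting every summand in a non-zero element.
Then `A·U·A = S` for every dense subset `A` of `S`. -/
theorem dense_mul_open_mul_dense_eq_univ_primitive
    {S : Type*} [SemigroupWithZero S] [TopologicalSpace S] [T2Space S]
    (continuous_mul : Continuous fun p : S × S => p.1 * p.2)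
    (inv : S → S) (hinv : IsInverseSemigroup S inv) (hinvc : Continuous inv)
    (hnt : Nontrivial S) (hprim : IsPrimitiveInverse S)
    (d : BrandtDecomposition S) (hI : Nontrivial d.I)
    (U : Set S) (hUopen : IsOpen U) (hUne : U.Nonempty)
    (hU : ∀ i : d.I, ∃ x ∈ U, ∃ (α β : d.ι i) (g : d.G i),
      d.e x = OrthSum.elem i α g β) :
    ∀ A : Set S, Dense A → A * U * A = Set.univ := by
  classical
  intro A hA
  haveI : Nonempty S := ⟨0⟩
  have hmul_left : ∀ c : S, Continuous fun x : S => c * x :=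
    fun c => continuous_mul.comp (continuous_const.prodMk continuous_id)
  have hmul_right : ∀ c : S, Continuous fun x : S => x * c :=
    fun c => continuous_mul.comp (continuous_id.prodMk continuous_const)
  have hsand : ∀ c₁ c₂ : S, Continuous fun x : S => c₁ * x * c₂ :=
    fun c₁ c₂ => (hmul_right c₂).comp (hmul_left c₁)
  ext s
  simp only [Set.mem_univ, iff_true]
  rcases d.cases s with rfl | ⟨i, α, g, β, rfl⟩
  · -- the target is `0`
    obtain ⟨i, j, hij⟩ := hI.exists_pair_ne
    obtain ⟨u, huU, γ, δ, h, hue⟩ := hU j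
    have huel : u = d.el j γ h δ := by
      have := congrArg d.e.symm hue
      rwa [d.e.symm_apply_apply] at this
    obtain ⟨α⟩ := d.instNonempty i
    set c₁ : S := d.el i α 1 α with hc₁
    have hOopen : IsOpen {x : S | c₁ * x * c₁ ≠ 0} :=
      IsOpen.preimage (hsand c₁ c₁) isOpen_ne
    have hOne : ({x : S | c₁ * x * c₁ ≠ 0}).Nonempty := by
      refine ⟨c₁, ?_⟩
      simp only [Set.mem_setOf_eq, hc₁, d.el_mul_el_same, one_mul]
      exact d.el_ne_zero _ _ _ _
    obtain ⟨a, haA, haO⟩ := hA.exists_mem_open hOopen hOne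
    obtain ⟨c, rfl⟩ := d.eq_el_of_sandwich_ne_zero haO
    obtain ⟨b, hbA⟩ := hA.nonempty
    have h0 : d.el i α c α * u * b = 0 := by
      rw [huel, d.el_mul_el_ne hij, zero_mul]
    have hmem : d.el i α c α * u * b ∈ A * U * A :=
      Set.mul_mem_mul (Set.mul_mem_mul haA huU) hbA
    rwa [h0] at hmem
  · -- the target is the non-zero element `el i α g β`
    obtain ⟨u₀, hu₀U, γ, δ, h, hu₀e⟩ := hU i
    have hu₀el : u₀ = d.el i γ h δ := by
      have := congrArg d.e.symm hu₀e
      rwa [d.e.symm_apply_apply] at this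
    set s' : S := d.el i α g β with hs'
    set p : S := d.el i α (g * h⁻¹) γ with hp
    set q : S := d.el i δ 1 β with hq
    have hFc : Continuous fun ab : S × S => inv ab.1 * s' * inv ab.2 :=
      continuous_mul.comp
        (((hmul_right s').comp (hinvc.comp continuous_fst)).prodMk
          (hinvc.comp continuous_snd))
    set Ω : Set (S × S) :=
      {ab | inv ab.1 * s' * inv ab.2 ∈ U} ∩
      ({ab | d.el i α 1 α * ab.1 * d.el i γ 1 γ ≠ 0} ∩
       {ab | d.el i δ 1 δ * ab.2 * d.el i β 1 β ≠ 0}) with hΩ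
    have hΩopen : IsOpen Ω := by
      refine (hFc.isOpen_preimage U hUopen).inter (IsOpen.inter ?_ ?_)
      · exact IsOpen.preimage ((hsand _ _).comp continuous_fst) isOpen_ne
      · exact IsOpen.preimage ((hsand _ _).comp continuous_snd) isOpen_ne
    have hΩne : Ω.Nonempty := by
      refine ⟨(p, q), ?_, ?_, ?_⟩
      · show inv p * s' * inv q ∈ U
        rw [hp, hq, hs', d.inv_el hinv, d.inv_el hinv,
          d.el_mul_el_same, d.el_mul_el_same]
        have hgr : (g * h⁻¹)⁻¹ * g * 1⁻¹ = h := by group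
        rw [hgr, ← hu₀el]
        exact hu₀U
      · show d.el i α 1 α * p * d.el i γ 1 γ ≠ 0
        rw [hp, d.el_mul_el_same, d.el_mul_el_same]
        exact d.el_ne_zero _ _ _ _
      · show d.el i δ 1 δ * q * d.el i β 1 β ≠ 0
        rw [hq, d.el_mul_el_same, d.el_mul_el_same]
        exact d.el_ne_zero _ _ _ _
    obtain ⟨ab, habA, habΩ⟩ := (hA.prod hA).exists_mem_open hΩopen hΩne
    obtain ⟨a, b⟩ := ab
    obtain ⟨haA, hbA⟩ := habA
    obtain ⟨h1, h2, h3⟩ := habΩ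
    obtain ⟨c, rfl⟩ := d.eq_el_of_sandwich_ne_zero h2
    obtain ⟨k, rfl⟩ := d.eq_el_of_sandwich_ne_zero h3
    have hueq : inv (d.el i α c γ) * s' * inv (d.el i δ k β) =
        d.el i γ (c⁻¹ * g * k⁻¹) δ := by
      rw [hs', d.inv_el hinv, d.inv_el hinv, d.el_mul_el_same, d.el_mul_el_same]
    have hfin : d.el i α c γ * (inv (d.el i α c γ) * s' * inv (d.el i δ k β)) *
        d.el i δ k β = s' := by
      rw [hueq, d.el_mul_el_same, d.el_mul_el_same, hs']
      have : c * (c⁻¹ * g * k⁻¹) * k = g := by group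
      rw [this]
    have hmem : d.el i α c γ * (inv (d.el i α c γ) * s' * inv (d.el i δ k β)) *
        d.el i δ k β ∈ A * U * A :=
      Set.mul_mem_mul (Set.mul_mem_mul haA h1) hbA
    rwa [hfin] at hmem
end

section
/- Let S be a primitive Hausdorff pseudocompact topological inverse semigroup, topologically isomorphic to the orthogonal sum ∑_{i∈I} B_{λ_i}(G_i) of topological Brandt λ_i-extensions of topological groups G_i. Then the space S is normal if and only if for every i ∈ I the underlying space of the topological group G_i is normal. -/
open Topology

/-- A (Hausdorff) topological space is *pseudocompact* if every locally finite
family of non-empty open subsets is finite. -/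
def IsPseudocompact (X : Type*) [TopologicalSpace X] : Prop :=
  ∀ 𝒰 : Set (Set X), (∀ U ∈ 𝒰, IsOpen U ∧ U.Nonempty) →
    LocallyFinite (fun U : 𝒰 => (U : Set X)) → 𝒰.Finite

/-- A witness that the topological semigroup `S` with zero is topologically
isomorphic to the orthogonal sum of a family of topological Brandt
`λ i`-extensions `B_{λ i}(G i)` of topological groups `G i` (in the category of
topological inverse semigroups): an isomorphism of semigroups with zero which
is a homeomorphism, such that each subset `(G i)_{α,β}` of `S` carries the
topology of the group `G i`. -/
structure TopBrandtDecomposition (S : Type*) [Mul S] [Zero S] [TopologicalSpace S] where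
  I : Type*
  ι : I → Type*
  G : I → Type*
  [instNonempty : ∀ i, Nonempty (ι i)]
  [instGroup : ∀ i, Group (G i)]
  [instTopG : ∀ i, TopologicalSpace (G i)]
  [instTopGrpG : ∀ i, IsTopologicalGroup (G i)]
  [instTopSum : TopologicalSpace (OrthSum I ι G)]
  e : S ≃ₜ OrthSum I ι G
  map_mul : ∀ x y : S, e (x * y) = e x * e y
  map_zero : e 0 = 0
  embed : ∀ (i : I) (α β : ι i),
    Topology.IsEmbedding fun g : G i => e.symm (OrthSum.elem i α g β)


section Aux
open Classical
variable {I : Type*} {ι : I → Type*} {G : I → Type*}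

private lemma orthMul_same [∀ i, Mul (G i)] (i : I) (α : ι i) (a : G i) (β γ : ι i) (b : G i) (δ : ι i) :
    (OrthSum.elem i α a β * OrthSum.elem i γ b δ : OrthSum I ι G)
      = if β = γ then OrthSum.elem i α (a * b) δ else 0 := by
  have h : (OrthSum.elem i α a β * OrthSum.elem i γ b δ : OrthSum I ι G) =
      if h : i = i then
        (if cast (congrArg ι h) β = γ then
          (some ⟨i, (cast (congrArg ι h) α, (cast (congrArg G h) a) * b, δ)⟩ :
            Option (Σ i : I, ι i × G i × ι i))
        else none)
      else none := rfl
  rw [h, dif_pos rfl]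
  simp only [cast_eq]
  rfl

private lemma orthMul_diff [∀ i, Mul (G i)] {i j : I} (hij : i ≠ j) (α : ι i) (a : G i) (β : ι i) (γ : ι j) (b : G j) (δ : ι j) :
    (OrthSum.elem i α a β * OrthSum.elem j γ b δ : OrthSum I ι G) = 0 := by
  have h : (OrthSum.elem i α a β * OrthSum.elem j γ b δ : OrthSum I ι G) =
      if h : i = j then
        (if cast (congrArg ι h) β = γ then
          (some ⟨j, (cast (congrArg ι h) α, (cast (congrArg G h) a) * b, δ)⟩ :
            Option (Σ i : I, ι i × G i × ι i))
        else none)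
      else none := rfl
  rw [h, dif_neg hij]
  rfl

private lemma orthZero_mul [∀ i, Mul (G i)] (x : OrthSum I ι G) : (0 : OrthSum I ι G) * x = 0 := by
  cases x <;> rfl

private lemma orthMul_zero [∀ i, Mul (G i)] (x : OrthSum I ι G) : x * (0 : OrthSum I ι G) = 0 := by
  cases x <;> rfl


private lemma orth_zero_def : (0 : OrthSum I ι G) = none := rfl

private lemma elem_ne_zero {i : I} {α : ι i} {a : G i} {β : ι i} :
    (OrthSum.elem i α a β : OrthSum I ι G) ≠ 0 := by
  rw [orth_zero_def]; exact Option.some_ne_none _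

private lemma elem_inj {i j : I} {α : ι i} {a : G i} {β : ι i} {γ : ι j} {b : G j} {δ : ι j}
    (h : (OrthSum.elem i α a β : OrthSum I ι G) = OrthSum.elem j γ b δ) :
    (⟨i, (α, β)⟩ : Σ k : I, ι k × ι k) = ⟨j, (γ, δ)⟩ := by
  have h1 : (⟨i, (α, a, β)⟩ : Σ k : I, ι k × G k × ι k) = ⟨j, (γ, b, δ)⟩ := Option.some.inj h
  have h2 : i = j := congrArg Sigma.fst h1
  subst h2
  have h3 := sigma_mk_injective h1
  cases h3
  rfl

private def flipT [∀ i, Inv (G i)] : OrthSum I ι G → OrthSum I ι G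
  | none => none
  | some ⟨i, (α, g, β)⟩ => some ⟨i, (β, g⁻¹, α)⟩

private lemma flipT_elem [∀ i, Inv (G i)] (i : I) (α : ι i) (g : G i) (β : ι i) :
    flipT (OrthSum.elem i α g β : OrthSum I ι G) = OrthSum.elem i β g⁻¹ α := rfl

private lemma elem_mul_elem [∀ i, Group (G i)] (i : I) (α : ι i) (a : G i) (β : ι i)
    (b : G i) (δ : ι i) :
    (OrthSum.elem i α a β * OrthSum.elem i β b δ : OrthSum I ι G)
      = OrthSum.elem i α (a * b) δ := by
  rw [orthMul_same, if_pos rfl]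

private lemma triple_one [∀ i, Group (G i)] (t : OrthSum I ι G) : t * flipT t * t = t := by
  match t with
  | none =>
      rfl
  | some ⟨j, (γ, g, δ)⟩ =>
      have e1 : (some ⟨j, (γ, g, δ)⟩ : OrthSum I ι G) = OrthSum.elem j γ g δ := rfl
      rw [e1, flipT_elem, elem_mul_elem, elem_mul_elem, mul_inv_cancel, one_mul]

private lemma triple_two [∀ i, Group (G i)] (t : OrthSum I ι G) :
    flipT t * t * flipT t = flipT t := by
  match t with
  | none => rfl
  | some ⟨j, (γ, g, δ)⟩ =>
      have e1 : (some ⟨j, (γ, g, δ)⟩ : OrthSum I ι G) = OrthSum.elem j γ g δ := rfl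
      rw [e1, flipT_elem, elem_mul_elem, elem_mul_elem, inv_mul_cancel, one_mul]

private lemma mulflip_eq_iff [∀ i, Group (G i)] (t : OrthSum I ι G) (i : I) (α β : ι i) :
    (t * flipT t = OrthSum.elem i α 1 α ∧ flipT t * t = OrthSum.elem i β 1 β)
      ↔ ∃ g : G i, t = OrthSum.elem i α g β := by
  constructor
  · rintro ⟨h1, h2⟩
    match t with
    | none => exact absurd h1.symm elem_ne_zero
    | some ⟨j, (γ, g, δ)⟩ =>
        have e1 : (some ⟨j, (γ, g, δ)⟩ : OrthSum I ι G) = OrthSum.elem j γ g δ := rfl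
        rw [e1, flipT_elem, elem_mul_elem] at h1
        rw [e1, flipT_elem, elem_mul_elem] at h2
        have h3 := elem_inj h1
        have h4 := elem_inj h2
        have hji : j = i := congrArg Sigma.fst h3
        subst hji
        have p3 := sigma_mk_injective h3
        have p4 := sigma_mk_injective h4
        injection p3 with q1 q2
        injection p4 with q3 q4
        subst q1; subst q3
        exact ⟨g, rfl⟩
  · rintro ⟨g, rfl⟩
    rw [flipT_elem, elem_mul_elem, elem_mul_elem, mul_inv_cancel, inv_mul_cancel]
    exact ⟨rfl, rfl⟩

private lemma mulflip_ne_iff [∀ i, Group (G i)] (t : OrthSum I ι G) (i : I) (α β : ι i) :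
    ((t * flipT t) * OrthSum.elem i α 1 α ≠ 0 ∧ OrthSum.elem i β 1 β * (flipT t * t) ≠ 0)
      ↔ ∃ g : G i, t = OrthSum.elem i α g β := by
  constructor
  · rintro ⟨h1, h2⟩
    match t with
    | none => exact absurd (orthZero_mul _) h1
    | some ⟨j, (γ, g, δ)⟩ =>
        have e1 : (some ⟨j, (γ, g, δ)⟩ : OrthSum I ι G) = OrthSum.elem j γ g δ := rfl
        rw [e1, flipT_elem, elem_mul_elem] at h1 h2
        by_cases hji : j = i
        · subst hji
          rw [orthMul_same] at h1
          rw [orthMul_same] at h2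
          by_cases hγ : γ = α
          · by_cases hδ : β = δ
            · subst hγ; subst hδ; exact ⟨g, rfl⟩
            · rw [if_neg hδ] at h2; exact absurd rfl h2
          · rw [if_neg hγ] at h1; exact absurd rfl h1
        · rw [orthMul_diff hji] at h1
          exact absurd rfl h1
  · rintro ⟨g, rfl⟩
    rw [flipT_elem, elem_mul_elem, elem_mul_elem, orthMul_same, if_pos rfl,
      orthMul_same, if_pos rfl]
    exact ⟨elem_ne_zero, elem_ne_zero⟩

end Aux

/-- Let `S` be a primitive Hausdorff pseudocompact
topological inverse semigroup, topologically isomorphic to the orthogonal sum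
of topological Brandt `λ i`-extensions of topological groups `G i`. Then `S`
is a normal space iff for every `i` the space of the topological group `G i`
is normal. -/
theorem normal_iff_groups_normal
    {S : Type*} [SemigroupWithZero S] [TopologicalSpace S] [T2Space S]
    (continuous_mul : Continuous fun p : S × S => p.1 * p.2)
    (inv : S → S) (hinv : IsInverseSemigroup S inv) (hinvc : Continuous inv)
    (hnt : Nontrivial S) (hprim : IsPrimitiveInverse S)
    (hpc : IsPseudocompact S)
    (d : TopBrandtDecomposition S) :
    NormalSpace S ↔ ∀ i : d.I, @NormalSpace (d.G i) (d.instTopG i) := by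
  classical
  obtain ⟨I, ι, G, eqv, hmul, hzero, hembed⟩ := d
  -- injectivity of the isomorphism
  have hinj : Function.Injective (eqv : S → OrthSum I ι G) := by
    intro x y h
    have := congrArg eqv.symm h
    simpa using this
  -- `eqv.symm` is multiplicative
  have hσ : ∀ a b : OrthSum I ι G, eqv.symm a * eqv.symm b = eqv.symm (a * b) := by
    intro a b
    apply hinj
    rw [hmul]
    simp
  have hσ0 : eqv.symm 0 = (0 : S) := by
    rw [← hzero]
    simp
  -- the inversion corresponds to `flipT`
  have hflip : ∀ t : OrthSum I ι G, inv (eqv.symm t) = eqv.symm (flipT t) := by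
    intro t
    refine (hinv.inv_unique _ _ ?_ ?_).symm
    · rw [hσ, hσ, triple_one]
    · rw [hσ, hσ, triple_two]
  have heqvinv : ∀ x : S, eqv (inv x) = flipT (eqv x) := by
    intro x
    conv_lhs => rw [← eqv.symm_apply_apply x]
    rw [hflip]
    simp
  have hinv0 : inv (0 : S) = 0 := by
    have h := hflip (0 : OrthSum I ι G)
    have hf0 : flipT (0 : OrthSum I ι G) = 0 := rfl
    rwa [hf0, hσ0] at h
  have hσinj : Function.Injective (eqv.symm : OrthSum I ι G → S) := fun a b h => by
    simpa using congrArg eqv h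
  have hσne : ∀ u : OrthSum I ι G, eqv.symm u = (0 : S) ↔ u = 0 :=
    fun u => ⟨fun h => hσinj (h.trans hσ0.symm), fun h => h ▸ hσ0⟩
  -- the H-classes
  set Cc : (Σ k : I, ι k × ι k) → Set S :=
    fun j => Set.range (fun g : G j.1 => eqv.symm (OrthSum.elem j.1 j.2.1 g j.2.2)) with hCc
  have hmem : ∀ (j : Σ k : I, ι k × ι k) (x : S),
      x ∈ Cc j ↔ ∃ g : G j.1, eqv x = OrthSum.elem j.1 j.2.1 g j.2.2 := by
    intro j x
    constructor
    · rintro ⟨g, rfl⟩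
      exact ⟨g, by simp⟩
    · rintro ⟨g, hg⟩
      exact ⟨g, by simpa using congrArg eqv.symm hg.symm⟩
  have hC0 : ∀ j, (0 : S) ∉ Cc j := by
    intro j h
    rw [hmem] at h
    obtain ⟨g, hg⟩ := h
    rw [hzero] at hg
    exact elem_ne_zero hg.symm
  have hCne : ∀ j, (Cc j).Nonempty := fun j =>
    ⟨eqv.symm (OrthSum.elem j.1 j.2.1 1 j.2.2), ⟨1, rfl⟩⟩
  have hdisj : ∀ (j j' : Σ k : I, ι k × ι k) (x : S), x ∈ Cc j → x ∈ Cc j' → j = j' := by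
    intro j j' x h h'
    rw [hmem] at h h'
    obtain ⟨g, hg⟩ := h
    obtain ⟨g', hg'⟩ := h'
    exact elem_inj (hg.symm.trans hg')
  have hcover : ∀ x : S, x ≠ 0 → ∃ j, x ∈ Cc j := by
    intro x hx
    match ht : eqv x with
    | none =>
        exact absurd (by rw [← eqv.symm_apply_apply x, ht]; exact hσ0) hx
    | some ⟨i, (α, g, β)⟩ =>
        exact ⟨⟨i, (α, β)⟩, (hmem _ _).mpr ⟨g, ht⟩⟩
  -- continuity of auxiliary maps
  have hxx : Continuous fun x : S => x * inv x :=
    continuous_mul.comp (continuous_id.prodMk hinvc)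
  have hxx' : Continuous fun x : S => inv x * x :=
    continuous_mul.comp (hinvc.prodMk continuous_id)
  -- each class is open
  have hCopen : ∀ j, IsOpen (Cc j) := by
    intro j
    have hset : Cc j = (fun x : S => (x * inv x) * eqv.symm (OrthSum.elem j.1 j.2.1 1 j.2.1)) ⁻¹' {(0:S)}ᶜ ∩
        (fun x : S => eqv.symm (OrthSum.elem j.1 j.2.2 1 j.2.2) * (inv x * x)) ⁻¹' {(0:S)}ᶜ := by
      ext x
      rw [hmem]
      have e1 : (x * inv x) * eqv.symm (OrthSum.elem j.1 j.2.1 1 j.2.1)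
          = eqv.symm ((eqv x * flipT (eqv x)) * OrthSum.elem j.1 j.2.1 1 j.2.1) := by
        apply hinj; simp [hmul, heqvinv]
      have e2 : eqv.symm (OrthSum.elem j.1 j.2.2 1 j.2.2) * (inv x * x)
          = eqv.symm (OrthSum.elem j.1 j.2.2 1 j.2.2 * (flipT (eqv x) * eqv x)) := by
        apply hinj; simp [hmul, heqvinv]
      simp only [Set.mem_inter_iff, Set.mem_preimage, Set.mem_compl_iff, Set.mem_singleton_iff]
      rw [e1, e2, hσne, hσne]
      exact (mulflip_ne_iff (eqv x) j.1 j.2.1 j.2.2).symm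
    rw [hset]
    have hc1 : Continuous fun x : S => (x * inv x) * eqv.symm (OrthSum.elem j.1 j.2.1 1 j.2.1) :=
      continuous_mul.comp (hxx.prodMk continuous_const)
    have hc2 : Continuous fun x : S => eqv.symm (OrthSum.elem j.1 j.2.2 1 j.2.2) * (inv x * x) :=
      continuous_mul.comp (continuous_const.prodMk hxx')
    exact (isOpen_compl_singleton.preimage hc1).inter (isOpen_compl_singleton.preimage hc2)
  -- each class is closed
  have hCclosed : ∀ j, IsClosed (Cc j) := by
    intro j
    have hset : Cc j = {x : S | x * inv x = eqv.symm (OrthSum.elem j.1 j.2.1 1 j.2.1)} ∩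
        {x : S | inv x * x = eqv.symm (OrthSum.elem j.1 j.2.2 1 j.2.2)} := by
      ext x
      rw [hmem]
      have e1 : x * inv x = eqv.symm (eqv x * flipT (eqv x)) := by
        apply hinj; simp [hmul, heqvinv]
      have e2 : inv x * x = eqv.symm (flipT (eqv x) * eqv x) := by
        apply hinj; simp [hmul, heqvinv]
      simp only [Set.mem_inter_iff, Set.mem_setOf_eq]
      rw [e1, e2]
      constructor
      · intro hg
        obtain ⟨h1, h2⟩ := (mulflip_eq_iff (eqv x) j.1 j.2.1 j.2.2).mpr hg
        exact ⟨by rw [h1], by rw [h2]⟩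
      · rintro ⟨h1, h2⟩
        exact (mulflip_eq_iff (eqv x) j.1 j.2.1 j.2.2).mp ⟨hσinj h1, hσinj h2⟩
    rw [hset]
    exact (isClosed_eq hxx continuous_const).inter (isClosed_eq hxx' continuous_const)
  -- the key finiteness lemma: every open neighbourhood of zero contains all but
  -- finitely many classes
  have hRfin : ∀ W : Set S, IsOpen W → (0:S) ∈ W →
      {j : Σ k : I, ι k × ι k | ¬ Cc j ⊆ W}.Finite := by
    intro W hW hW0
    obtain ⟨N, hNopen, hN0, hNW⟩ : ∃ N : Set S, IsOpen N ∧ (0:S) ∈ N ∧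
        ∀ x ∈ N, ∀ y ∈ N, x * inv y ∈ W := by
      have hc : Continuous fun p : S × S => p.1 * inv p.2 :=
        continuous_mul.comp (continuous_fst.prodMk (hinvc.comp continuous_snd))
      have h0 : ((0:S), (0:S)) ∈ (fun p : S × S => p.1 * inv p.2) ⁻¹' W := by
        show (0:S) * inv 0 ∈ W
        rw [hinv0, mul_zero]
        exact hW0
      obtain ⟨u, v, hu, hv, h0u, h0v, huv⟩ := isOpen_prod_iff.mp (hW.preimage hc) 0 0 h0
      exact ⟨u ∩ v, hu.inter hv, ⟨h0u, h0v⟩, fun x hx y hy => huv (Set.mk_mem_prod hx.1 hy.2)⟩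
    -- by pseudocompactness, only finitely many classes are not contained in `closure N`
    have hBadFin : {j : Σ k : I, ι k × ι k | ¬ Cc j ⊆ closure N}.Finite := by
      have hUfin : ((fun j => Cc j \ closure N) '' {j | ¬ Cc j ⊆ closure N}).Finite := by
        apply hpc
        · rintro U ⟨j, hj, rfl⟩
          refine ⟨(hCopen j).sdiff isClosed_closure, ?_⟩
          rcases Set.not_subset.mp hj with ⟨y, hy1, hy2⟩
          exact ⟨y, hy1, hy2⟩
        · intro x
          by_cases hx0 : x = 0
          · refine ⟨N, hNopen.mem_nhds (by rw [hx0]; exact hN0), ?_⟩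
            apply Set.Finite.subset Set.finite_empty
            rintro u ⟨y, hyu, hyN⟩
            obtain ⟨j, hj, hval⟩ := u.2
            replace hyu : y ∈ (u : Set S) := hyu
            rw [← hval] at hyu
            exact (hyu.2 (subset_closure hyN)).elim
          · obtain ⟨j₀, hj₀⟩ := hcover x hx0
            refine ⟨Cc j₀, (hCopen j₀).mem_nhds hj₀, ?_⟩
            apply Set.Subsingleton.finite
            rintro u ⟨y, hyu, hyC⟩ u' ⟨y', hyu', hyC'⟩
            obtain ⟨j, hj, hval⟩ := u.2
            obtain ⟨j', hj', hval'⟩ := u'.2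
            replace hyu : y ∈ (u : Set S) := hyu
            replace hyu' : y' ∈ (u' : Set S) := hyu'
            rw [← hval] at hyu
            rw [← hval'] at hyu'
            apply Subtype.ext
            rw [← hval, ← hval']
            rw [hdisj j j₀ y hyu.1 hyC, hdisj j' j₀ y' hyu'.1 hyC']
      apply Set.Finite.of_finite_image hUfin
      intro j hj j' hj' heq
      rcases Set.not_subset.mp hj with ⟨y, hy1, hy2⟩
      have hyF : y ∈ Cc j' \ closure N := by
        have h' : Cc j \ closure N = Cc j' \ closure N := heq
        rw [← h']
        exact ⟨hy1, hy2⟩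
      exact hdisj j j' y hy1 hyF.1
    -- geometric step: two good classes in a common column force a class inside `W`
    have hgeo : ∀ (i : I) (α γ β : ι i),
        (⟨i, (α, β)⟩ : Σ k : I, ι k × ι k) ∉ {j | ¬ Cc j ⊆ closure N} →
        (⟨i, (γ, β)⟩ : Σ k : I, ι k × ι k) ∉ {j | ¬ Cc j ⊆ closure N} →
        Cc ⟨i, (α, γ)⟩ ⊆ W := by
      intro i α γ β h1 h2
      rw [Set.mem_setOf_eq, not_not] at h1 h2
      intro x hx
      rw [hmem] at hx
      obtain ⟨g, hg⟩ := hx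
      obtain ⟨z, hzC, hzN⟩ : (Cc ⟨i, (α, β)⟩ ∩ N).Nonempty := by
        obtain ⟨y, hy⟩ := hCne ⟨i, (α, β)⟩
        exact mem_closure_iff.mp (h1 hy) _ (hCopen _) hy
      rw [hmem] at hzC
      obtain ⟨b, hb⟩ := hzC
      have hwO : (inv x * z) ∈ (fun y : S => x * y) ⁻¹' N ∩ Cc ⟨i, (γ, β)⟩ := by
        constructor
        · show x * (inv x * z) ∈ N
          have hxz : x * (inv x * z) = z := by
            apply hinj
            rw [hmul, hmul, heqvinv, hg, hb, flipT_elem, elem_mul_elem, elem_mul_elem,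
              mul_inv_cancel_left]
          rw [hxz]
          exact hzN
        · rw [hmem]
          refine ⟨g⁻¹ * b, ?_⟩
          rw [hmul, heqvinv, hg, hb, flipT_elem, elem_mul_elem]
      have hO : IsOpen ((fun y : S => x * y) ⁻¹' N ∩ Cc ⟨i, (γ, β)⟩) :=
        (hNopen.preimage (continuous_mul.comp (continuous_const.prodMk continuous_id))).inter
          (hCopen _)
      obtain ⟨y, hyO, hyN⟩ := mem_closure_iff.mp (h2 hwO.2) _ hO hwO
      obtain ⟨hy1, hy2⟩ := hyO
      rw [hmem] at hy2
      obtain ⟨c, hc⟩ := hy2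
      have hxy : (x * y) * inv y = x := by
        apply hinj
        rw [hmul, hmul, heqvinv, hg, hc, flipT_elem, elem_mul_elem, elem_mul_elem,
          mul_inv_cancel_right]
      have hres := hNW (x * y) hy1 y hyN
      rwa [hxy] at hres
    -- combinatorial bookkeeping
    have hkey : ∀ (i : I) (α γ : ι i), ¬ Cc ⟨i, (α, γ)⟩ ⊆ W → ∀ β : ι i,
        (⟨i, (α, β)⟩ : Σ k : I, ι k × ι k) ∈ {j | ¬ Cc j ⊆ closure N} ∨
        (⟨i, (γ, β)⟩ : Σ k : I, ι k × ι k) ∈ {j | ¬ Cc j ⊆ closure N} := by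
      intro i α γ hj β
      by_contra hcon
      push_neg at hcon
      exact hj (hgeo i α γ β hcon.1 hcon.2)
    have hrowfin : ∀ i : I,
        {α : ι i | ∃ β, (⟨i, (α, β)⟩ : Σ k : I, ι k × ι k) ∈ {j | ¬ Cc j ⊆ closure N}}.Finite := by
      intro i
      have hpre : (Sigma.mk i ⁻¹' {j | ¬ Cc j ⊆ closure N}).Finite :=
        hBadFin.preimage sigma_mk_injective.injOn
      apply (hpre.image Prod.fst).subset
      rintro α ⟨β, hβ⟩
      exact ⟨(α, β), hβ, rfl⟩
    have hBWi : ∀ i : I, {p : ι i × ι i | ¬ Cc ⟨i, p⟩ ⊆ W}.Finite := by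
      intro i
      by_cases hfull : ∃ δ : ι i, ∀ β : ι i,
          (⟨i, (δ, β)⟩ : Σ k : I, ι k × ι k) ∈ {j | ¬ Cc j ⊆ closure N}
      · obtain ⟨δ, hδ⟩ := hfull
        haveI : Finite (ι i) := by
          have h2 : Function.Injective
              (fun β : ι i => (⟨i, (δ, β)⟩ : Σ k : I, ι k × ι k)) := by
            intro b b' hb
            have h3 := sigma_mk_injective hb
            exact congrArg Prod.snd h3
          have h1 : Set.univ ⊆
              (fun β : ι i => (⟨i, (δ, β)⟩ : Σ k : I, ι k × ι k)) ⁻¹' {j | ¬ Cc j ⊆ closure N} :=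
            fun β _ => hδ β
          exact Set.finite_univ_iff.mp ((hBadFin.preimage h2.injOn).subset h1)
        exact Set.toFinite _
      · push_neg at hfull
        apply ((hrowfin i).prod (hrowfin i)).subset
        rintro ⟨α, γ⟩ hp
        have hstep := hkey i α γ hp
        constructor
        · by_contra hα
          obtain ⟨β₀, hb⟩ := hfull γ
          rcases hstep β₀ with h | h
          · exact hα ⟨β₀, h⟩
          · exact hb h
        · by_contra hγ
          obtain ⟨β₀, hb⟩ := hfull α
          rcases hstep β₀ with h | h
          · exact hb h
          · exact hγ ⟨β₀, h⟩
    apply Set.Finite.subset (Set.Finite.biUnion (hBadFin.image Sigma.fst)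
      (fun i _ => (hBWi i).image (Sigma.mk i)))
    rintro ⟨i, p⟩ hj
    have hi : i ∈ Sigma.fst '' {j : Σ k : I, ι k × ι k | ¬ Cc j ⊆ closure N} := by
      obtain ⟨β₀⟩ := (inferInstance : Nonempty (ι i))
      rcases hkey i p.1 p.2 hj β₀ with h | h
      · exact ⟨_, h, rfl⟩
      · exact ⟨_, h, rfl⟩
    exact Set.mem_biUnion hi ⟨p, hj, rfl⟩
  -- regularity at zero
  have hreg : ∀ W : Set S, IsOpen W → (0:S) ∈ W →
      ∃ N : Set S, IsOpen N ∧ (0:S) ∈ N ∧ closure N ⊆ W := by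
    intro W hW hW0
    have hfin := hRfin W hW hW0
    refine ⟨W \ ⋃ j ∈ {j : Σ k : I, ι k × ι k | ¬ Cc j ⊆ W}, Cc j,
      hW.sdiff (hfin.isClosed_biUnion fun j _ => hCclosed j), ⟨hW0, ?_⟩, ?_⟩
    · intro h0
      rcases Set.mem_iUnion₂.mp h0 with ⟨j, -, hj0⟩
      exact hC0 j hj0
    · intro x hx
      by_cases hx0 : x = 0
      · rw [hx0]; exact hW0
      · obtain ⟨j, hj⟩ := hcover x hx0
        by_cases hjW : Cc j ⊆ W
        · exact hjW hj
        · exfalso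
          obtain ⟨y, hyC, hyN⟩ := mem_closure_iff.mp hx _ (hCopen j) hj
          exact hyN.2 (Set.mem_biUnion hjW hyC)
  constructor
  · -- normality of S gives normality of each group
    intro hN i
    obtain ⟨α⟩ := (inferInstance : Nonempty (ι i))
    exact IsClosedEmbedding.normalSpace
      (f := fun g : G i => eqv.symm (OrthSum.elem i α g α))
      ⟨hembed i α α, hCclosed ⟨i, (α, α)⟩⟩
  · -- normality of the groups gives normality of S
    intro hGn
    have hnorm : ∀ j : Σ k : I, ι k × ι k, NormalSpace ↥(Cc j) := by
      intro j
      haveI : NormalSpace (G j.1) := hGn j.1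
      exact (((hembed j.1 j.2.1 j.2.2).toHomeomorph).symm.isClosedEmbedding).normalSpace
    have main : ∀ A B : Set S, IsClosed A → IsClosed B → Disjoint A B → (0:S) ∉ B →
        SeparatedNhds A B := by
      intro A B hA hB hAB h0B
      obtain ⟨N, hNopen, hN0, hNcl⟩ := hreg Bᶜ hB.isOpen_compl h0B
      have hsep : ∀ j : Σ k : I, ι k × ι k, ∃ U V : Set S, IsOpen U ∧ IsOpen V ∧
          ((A ∪ closure N) ∩ Cc j) ⊆ U ∧ (B ∩ Cc j) ⊆ V ∧ U ⊆ Cc j ∧ V ⊆ Cc j ∧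
          Disjoint U V := by
        intro j
        haveI := hnorm j
        have hA' : IsClosed ((Subtype.val : Cc j → S) ⁻¹' (A ∪ closure N)) :=
          (hA.union isClosed_closure).preimage continuous_subtype_val
        have hB' : IsClosed ((Subtype.val : Cc j → S) ⁻¹' B) :=
          hB.preimage continuous_subtype_val
        have hd : Disjoint ((Subtype.val : Cc j → S) ⁻¹' (A ∪ closure N))
            ((Subtype.val : Cc j → S) ⁻¹' B) := by
          rw [Set.disjoint_left]
          rintro y (h | h) hyB
          · exact Set.disjoint_left.mp hAB h hyB
          · exact hNcl h hyB
        obtain ⟨U', V', hU'o, hV'o, hsubA, hsubB, hUV'⟩ := NormalSpace.normal _ _ hA' hB' hd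
        refine ⟨Subtype.val '' U', Subtype.val '' V',
          (hCopen j).isOpenMap_subtype_val _ hU'o, (hCopen j).isOpenMap_subtype_val _ hV'o,
          ?_, ?_, ?_, ?_, ?_⟩
        · rintro x ⟨hx1, hx2⟩
          exact ⟨⟨x, hx2⟩, hsubA hx1, rfl⟩
        · rintro x ⟨hx1, hx2⟩
          exact ⟨⟨x, hx2⟩, hsubB hx1, rfl⟩
        · rintro x ⟨y, -, rfl⟩
          exact y.2
        · rintro x ⟨y, -, rfl⟩
          exact y.2
        · rw [Set.disjoint_left]
          rintro x ⟨y, hy, rfl⟩ ⟨y', hy', hyy⟩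
          exact Set.disjoint_left.mp hUV' hy (by rwa [Subtype.ext hyy] at hy')
      choose U V hUo hVo hAU hBV hUC hVC hUV using hsep
      refine ⟨N ∪ ⋃ j, U j, ⋃ j, V j,
        hNopen.union (isOpen_iUnion hUo), isOpen_iUnion hVo, ?_, ?_, ?_⟩
      · intro x hx
        by_cases hx0 : x = 0
        · exact Or.inl (by rw [hx0]; exact hN0)
        · obtain ⟨j, hj⟩ := hcover x hx0
          exact Or.inr (Set.mem_iUnion.mpr ⟨j, hAU j ⟨Or.inl hx, hj⟩⟩)
      · intro x hx
        have hx0 : x ≠ 0 := fun h => h0B (h ▸ hx)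
        obtain ⟨j, hj⟩ := hcover x hx0
        exact Set.mem_iUnion.mpr ⟨j, hBV j ⟨hx, hj⟩⟩
      · rw [Set.disjoint_left]
        rintro x (hxN | hxU) hxV
        · obtain ⟨j, hj⟩ := Set.mem_iUnion.mp hxV
          have hxC : x ∈ Cc j := hVC j hj
          have hxU : x ∈ U j := hAU j ⟨Or.inr (subset_closure hxN), hxC⟩
          exact Set.disjoint_left.mp (hUV j) hxU hj
        · obtain ⟨j, hj⟩ := Set.mem_iUnion.mp hxV
          obtain ⟨j', hj'⟩ := Set.mem_iUnion.mp hxU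
          have hjj : j' = j := hdisj j' j x (hUC j' hj') (hVC j hj)
          subst hjj
          exact Set.disjoint_left.mp (hUV j') hj' hj
    refine ⟨fun A B hA hB hAB => ?_⟩
    by_cases h0B : (0:S) ∈ B
    · have h0A : (0:S) ∉ A := fun h => Set.disjoint_left.mp hAB h h0B
      exact (main B A hB hA hAB.symm h0A).symm
    · exact main A B hA hB hAB h0B
end
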